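/- Let k be an algebraically closed field of characteristic zero and A ∈ k[[z]] of order n ≥ 2. For X₁, X₂ ∈ z·k[[z]], the equality A ∘ X₁ = A ∘ X₂ holds if and only if X₂ = φ ∘ X₁ for some φ of order 1 with A ∘ φ = A. -/

import Mathlib

open PowerSeries

/-- Composition (substitution) `comp A B = A ∘ B` of formal power series,
the standard coefficient formula, well-behaved when `B` has zero constant term. -/
noncomputable def comp {k : Type*} [Field k] (A B : PowerSeries k) : PowerSeries k :=
  PowerSeries.mk fun n =>
    ∑ i ∈ Finset.range (n + 1), (PowerSeries.coeff i A) * (PowerSeries.coeff n (B ^ i))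

/-- `iterComp φ j` is the `j`-fold compositional iterate `φ^{∘j}` (with `φ^{∘0} = z`). -/
noncomputable def iterComp {k : Type*} [Field k] (φ : PowerSeries k) : ℕ → PowerSeries k
  | 0 => PowerSeries.X
  | n + 1 => comp φ (iterComp φ n)

/-- Composition of a list of power series: `compList [A₁, …, A_r] = A₁ ∘ ⋯ ∘ A_r`. -/
noncomputable def compList {k : Type*} [Field k] : List (PowerSeries k) → PowerSeries k
  | [] => PowerSeries.X
  | a :: t => comp a (compList t)

namespace CompAux

variable {k : Type*} [Field k]

lemma coeff_comp (F G : PowerSeries k) (m : ℕ) :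
    coeff m (comp F G) =
      ∑ i ∈ Finset.range (m + 1), coeff i F * coeff m (G ^ i) := by
  simp [comp, coeff_mk]

lemma coeff_pow_of_lt {G : PowerSeries k} (hG : constantCoeff G = 0) :
    ∀ i m : ℕ, m < i → coeff m (G ^ i) = 0 := by
  intro i
  induction i with
  | zero => intro m hm; omega
  | succ i ih =>
    intro m hm
    rw [pow_succ, coeff_mul]
    apply Finset.sum_eq_zero
    rintro ⟨p, q⟩ hpq
    rw [Finset.HasAntidiagonal.mem_antidiagonal] at hpq
    rcases Nat.eq_zero_or_pos q with hq | hq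
    · subst hq
      rw [← coeff_zero_eq_constantCoeff] at hG
      rw [hG, mul_zero]
    · rw [ih p (by omega), zero_mul]

lemma coeff_comp_congr_left {Y Y' : PowerSeries k} (H : PowerSeries k) {m : ℕ}
    (h : ∀ j ≤ m, coeff j Y = coeff j Y') :
    coeff m (comp Y H) = coeff m (comp Y' H) := by
  rw [coeff_comp, coeff_comp]
  refine Finset.sum_congr rfl fun i hi => ?_
  rw [Finset.mem_range] at hi
  rw [h i (by omega)]

/-- the polynomial approximation of the composition -/
noncomputable def SS (N : ℕ) (F G : PowerSeries k) : PowerSeries k :=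
  ∑ i ∈ Finset.range N, PowerSeries.C (coeff i F) * G ^ i

lemma coeff_SS (N : ℕ) (F G : PowerSeries k) (m : ℕ) :
    coeff m (SS N F G) = ∑ i ∈ Finset.range N, coeff i F * coeff m (G ^ i) := by
  simp [SS, coeff_C_mul]

lemma coeff_comp_SS {G : PowerSeries k} (hG : constantCoeff G = 0) (F : PowerSeries k)
    {m N : ℕ} (h : m < N) :
    coeff m (comp F G) = coeff m (SS N F G) := by
  rw [coeff_comp, coeff_SS]
  refine Finset.sum_subset ?_ ?_
  · intro i hi
    rw [Finset.mem_range] at hi ⊢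
    omega
  · intro i _ hi
    rw [Finset.mem_range, not_lt] at hi
    rw [coeff_pow_of_lt hG i m (by omega), mul_zero]

lemma constantCoeff_comp (F G : PowerSeries k) :
    constantCoeff (comp F G) = constantCoeff F := by
  rw [← coeff_zero_eq_constantCoeff, coeff_comp]
  simp

lemma comp_X_right (F : PowerSeries k) : comp F X = F := by
  ext m
  rw [coeff_comp]
  simp only [coeff_X_pow]
  rw [Finset.sum_eq_single m]
  · simp
  · intro i _ hi; simp [hi.symm]  -- if m = i false
  · intro h; exact absurd (Finset.self_mem_range_succ m) h

lemma comp_X_left {G : PowerSeries k} (hG : constantCoeff G = 0) : comp X G = G := by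
  ext m
  rw [coeff_comp]
  rcases Nat.eq_zero_or_pos m with rfl | hm
  · rw [coeff_zero_eq_constantCoeff, hG]
    simp
  · rw [Finset.sum_eq_single 1]
    · simp
    · intro i hi h1
      rcases i with _ | _ | i
      · simp
      · omega
      · simp [coeff_X]
    · intro h; exact absurd (by rw [Finset.mem_range]; omega) h

lemma comp_C_left (c : k) (G : PowerSeries k) : comp (C c) G = C c := by
  ext m
  rw [coeff_comp, Finset.sum_eq_single 0]
  · simp [coeff_C]
  · intro i _ hi
    simp [coeff_C, hi]
  · intro h; exact absurd (by rw [Finset.mem_range]; omega) h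

lemma comp_one_left (G : PowerSeries k) : comp 1 G = 1 := by
  have := comp_C_left (1 : k) G
  simpa using this

lemma comp_zero_left (G : PowerSeries k) : comp 0 G = 0 := by
  have := comp_C_left (0 : k) G
  simpa using this

lemma comp_zero_right (F : PowerSeries k) : comp F 0 = C (constantCoeff F) := by
  ext m
  rw [coeff_comp, Finset.sum_eq_single 0]
  · simp [coeff_C, coeff_one, coeff_zero_eq_constantCoeff]
  · intro i _ hi
    rw [zero_pow hi, map_zero, mul_zero]
  · intro h; exact absurd (by rw [Finset.mem_range]; omega) h

lemma comp_add_left (F F' G : PowerSeries k) :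
    comp (F + F') G = comp F G + comp F' G := by
  ext m
  rw [map_add, coeff_comp, coeff_comp, coeff_comp, ← Finset.sum_add_distrib]
  refine Finset.sum_congr rfl fun i _ => ?_
  rw [map_add, add_mul]

lemma comp_sum_left {ι : Type*} [DecidableEq ι] (s : Finset ι) (f : ι → PowerSeries k) (G : PowerSeries k) :
    comp (∑ i ∈ s, f i) G = ∑ i ∈ s, comp (f i) G := by
  induction s using Finset.induction with
  | empty => simp [comp_zero_left]
  | insert x s hx ih =>
    rw [Finset.sum_insert hx, Finset.sum_insert hx, comp_add_left, ih]


lemma K_eval {G : PowerSeries k} (hG : constantCoeff G = 0) (P Q : Polynomial k) {N : ℕ}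
    (h : ∀ s < N, P.coeff s = Q.coeff s) {m : ℕ} (hm : m < N) :
    coeff m (Polynomial.eval₂ (C (R := k)) G P) = coeff m (Polynomial.eval₂ (C (R := k)) G Q) := by
  set N' := max (P.natDegree + 1) (max (Q.natDegree + 1) N) with hN'
  rw [Polynomial.eval₂_eq_sum_range' (C (R := k)) (by omega : P.natDegree < N') G,
    Polynomial.eval₂_eq_sum_range' (C (R := k)) (by omega : Q.natDegree < N') G]
  rw [map_sum, map_sum]
  refine Finset.sum_congr rfl fun i _ => ?_
  by_cases hi : i < N
  · rw [h i hi]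
  · rw [coeff_C_mul, coeff_C_mul, coeff_pow_of_lt hG i m (by omega), mul_zero, mul_zero]

lemma SS_eq_eval (N : ℕ) (F G : PowerSeries k) :
    SS N F G = Polynomial.eval₂ (C (R := k)) G (trunc N F) := by
  rw [eval₂_trunc_eq_sum_range G (C (R := k)) N F, SS]

lemma comp_mul_left {G : PowerSeries k} (hG : constantCoeff G = 0) (F F' : PowerSeries k) :
    comp (F * F') G = comp F G * comp F' G := by
  ext m
  set N := m + 1 with hN
  have h1 : coeff m (comp (F * F') G) =
      coeff m (Polynomial.eval₂ (C (R := k)) G (trunc N (F * F'))) := by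
    rw [coeff_comp_SS hG _ (by omega : m < N), SS_eq_eval]
  have h2 : ∀ s < N, (trunc N (F * F')).coeff s = (trunc N F * trunc N F').coeff s := by
    intro s hs
    rw [coeff_trunc, if_pos hs, Polynomial.coeff_mul, PowerSeries.coeff_mul]
    refine Finset.sum_congr rfl fun p hp => ?_
    rw [Finset.HasAntidiagonal.mem_antidiagonal] at hp
    rw [coeff_trunc, coeff_trunc, if_pos (by omega), if_pos (by omega)]
  have h3 : coeff m (comp F G * comp F' G) =
      coeff m (Polynomial.eval₂ (C (R := k)) G (trunc N F) * Polynomial.eval₂ (C (R := k)) G (trunc N F')) := by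
    rw [PowerSeries.coeff_mul, PowerSeries.coeff_mul]
    refine Finset.sum_congr rfl fun p hp => ?_
    rw [Finset.HasAntidiagonal.mem_antidiagonal] at hp
    rw [coeff_comp_SS hG F (by omega : p.1 < N), coeff_comp_SS hG F' (by omega : p.2 < N),
      SS_eq_eval, SS_eq_eval]
  rw [h1, K_eval hG _ _ h2 (by omega : m < N), Polynomial.eval₂_mul, h3]

lemma comp_pow_left {G : PowerSeries k} (hG : constantCoeff G = 0) (F : PowerSeries k) (i : ℕ) :
    comp (F ^ i) G = (comp F G) ^ i := by
  induction i with
  | zero => simpa using comp_one_left G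
  | succ i ih => rw [pow_succ, pow_succ, comp_mul_left hG, ih]

lemma comp_C_mul_left {G : PowerSeries k} (hG : constantCoeff G = 0) (c : k)
    (F : PowerSeries k) : comp (C c * F) G = C c * comp F G := by
  rw [comp_mul_left hG, comp_C_left]

lemma comp_assoc (F : PowerSeries k) {G H : PowerSeries k}
    (hG : constantCoeff G = 0) (hH : constantCoeff H = 0) :
    comp (comp F G) H = comp F (comp G H) := by
  have hGH : constantCoeff (comp G H) = 0 := by rw [constantCoeff_comp, hG]
  ext m
  set N := m + 1 with hN
  have e1 : coeff m (comp (comp F G) H) = coeff m (comp (SS N F G) H) :=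
    coeff_comp_congr_left H fun j hj => coeff_comp_SS hG F (by omega)
  have e2 : comp (SS N F G) H = SS N F (comp G H) := by
    rw [SS, SS, comp_sum_left]
    refine Finset.sum_congr rfl fun i _ => ?_
    rw [comp_C_mul_left hH, comp_pow_left hH]
  rw [e1, e2, ← coeff_comp_SS hGH F (by omega : m < N)]


/-- Key lemma: the `m`-th coefficient of an `n`-th power, as a function of the `m`-th
coefficient, given all lower coefficients. -/
lemma coeff_pow_key {P Q : PowerSeries k} {m : ℕ} (hm : 1 ≤ m) (n : ℕ)
    (h : ∀ j < m, coeff j P = coeff j Q) :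
    coeff m (P ^ n) = coeff m (Q ^ n) +
      (n : k) * (constantCoeff P) ^ (n - 1) * (coeff m P - coeff m Q) := by
  have h0 : constantCoeff P = constantCoeff Q := by
    rw [← coeff_zero_eq_constantCoeff_apply, ← coeff_zero_eq_constantCoeff_apply]
    exact h 0 (by omega)
  have hg := geom_sum₂_mul P Q n
  have hc : coeff m ((∑ i ∈ Finset.range n, P ^ i * Q ^ (n - 1 - i)) * (P - Q)) =
      (n : k) * (constantCoeff P) ^ (n - 1) * (coeff m P - coeff m Q) := by
    rw [PowerSeries.coeff_mul]
    rw [Finset.sum_eq_single_of_mem (0, m) (by simp)]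
    · have hg0 : coeff 0 (∑ i ∈ Finset.range n, P ^ i * Q ^ (n - 1 - i)) =
          (n : k) * (constantCoeff P) ^ (n - 1) := by
        rw [coeff_zero_eq_constantCoeff_apply, map_sum]
        have : ∀ i ∈ Finset.range n,
            constantCoeff (P ^ i * Q ^ (n - 1 - i)) = (constantCoeff P) ^ (n - 1) := by
          intro i hi
          rw [Finset.mem_range] at hi
          rw [map_mul, map_pow, map_pow, ← h0, ← pow_add]
          congr 1
          omega
        rw [Finset.sum_congr rfl this, Finset.sum_const, Finset.card_range, nsmul_eq_mul]
      rw [hg0, map_sub]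
    · rintro ⟨p, q⟩ hpq hne
      rw [Finset.HasAntidiagonal.mem_antidiagonal] at hpq
      have hq : q < m := by
        rcases Nat.lt_or_ge q m with h' | h'
        · exact h'
        · exfalso
          apply hne
          have hq' : q = m := by omega
          have hp' : p = 0 := by omega
          subst hq' hp'
          rfl
      rw [map_sub, h q hq, sub_self, mul_zero]
  rw [hg, map_sub] at hc
  linear_combination hc

lemma pow_left_injective {P Q : PowerSeries k} {n : ℕ} (hn : (n : k) ≠ 0)
    (h0 : constantCoeff P = constantCoeff Q) (hc : constantCoeff P ≠ 0)
    (hPQ : P ^ n = Q ^ n) : P = Q := by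
  ext m
  induction m using Nat.strong_induction_on with
  | _ m ih =>
    rcases Nat.eq_zero_or_pos m with rfl | hm
    · rw [coeff_zero_eq_constantCoeff_apply, coeff_zero_eq_constantCoeff_apply, h0]
    · have key := coeff_pow_key hm n (fun j hj => ih j hj)
      rw [hPQ] at key
      have h1 : (n : k) * (constantCoeff P) ^ (n - 1) * (coeff m P - coeff m Q) = 0 := by
        linear_combination -key
      have hne : (n : k) * (constantCoeff P) ^ (n - 1) ≠ 0 :=
        mul_ne_zero hn (pow_ne_zero _ hc)
      have h2 := (mul_eq_zero.mp h1).resolve_left hne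
      linear_combination h2

/-- for powers of series with zero constant term and exponent ≥ 2, the `m`-th coefficient
only depends on lower coefficients -/
lemma coeff_pow_congr {P Q : PowerSeries k} {m : ℕ} (hm : 1 ≤ m) {i : ℕ} (hi : 2 ≤ i)
    (hP : constantCoeff P = 0)
    (h : ∀ j < m, coeff j P = coeff j Q) :
    coeff m (P ^ i) = coeff m (Q ^ i) := by
  rw [coeff_pow_key hm i h, hP, zero_pow (by omega : i - 1 ≠ 0), mul_zero, zero_mul, add_zero]


/-! ### Triangular recursion machinery -/

noncomputable def fixSeq (step : (ℕ → k) → ℕ → k) : ℕ → ℕ → k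
  | 0 => fun _ => 0
  | m + 1 => fun j => if j = m then step (fixSeq step m) m else fixSeq step m j

noncomputable def fixFun (step : (ℕ → k) → ℕ → k) : ℕ → k := fun m => fixSeq step (m + 1) m

lemma fixSeq_eq_fixFun (step : (ℕ → k) → ℕ → k) :
    ∀ M j, j < M → fixSeq step M j = fixFun step j := by
  intro M
  induction M with
  | zero => omega
  | succ M ih =>
    intro j hj
    by_cases h : j = M
    · subst h
      rfl
    · have hj' : j < M := by omega
      show (if j = M then step (fixSeq step M) M else fixSeq step M j) = fixFun step j
      rw [if_neg h, ih j hj']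

lemma fixFun_spec {step : (ℕ → k) → ℕ → k}
    (hloc : ∀ c c' m, (∀ j < m, c j = c' j) → step c m = step c' m) (m : ℕ) :
    fixFun step m = step (fixFun step) m := by
  show (if m = m then step (fixSeq step m) m else fixSeq step m m) = step (fixFun step) m
  rw [if_pos rfl]
  exact hloc _ _ m (fun j hj => fixSeq_eq_fixFun step m j hj)

/-! ### n-th roots -/

lemma exists_nth_root {u : PowerSeries k} {n : ℕ} (hn : (n : k) ≠ 0) {r : k} (hr0 : r ≠ 0)
    (hr : r ^ n = constantCoeff u) :
    ∃ V : PowerSeries k, constantCoeff V = r ∧ V ^ n = u := by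
  set step : (ℕ → k) → ℕ → k := fun c m =>
    if m = 0 then r else
      ((n : k) * r ^ (n - 1))⁻¹ *
        (coeff m u - coeff m ((PowerSeries.mk fun j => if j < m then c j else 0) ^ n))
    with hstep
  have hloc : ∀ c c' m, (∀ j < m, c j = c' j) → step c m = step c' m := by
    intro c c' m h
    rcases Nat.eq_zero_or_pos m with rfl | hm
    · simp [hstep]
    · have : (PowerSeries.mk fun j => if j < m then c j else 0) =
          (PowerSeries.mk fun j => if j < m then c' j else 0) := by
        ext j
        rw [coeff_mk, coeff_mk]
        split_ifs with hj
        · exact h j hj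
        · rfl
      simp only [hstep, this]
  set V : PowerSeries k := PowerSeries.mk (fixFun step) with hV
  have hV0 : constantCoeff V = r := by
    rw [hV, ← coeff_zero_eq_constantCoeff_apply, coeff_mk, fixFun_spec hloc]
    simp [hstep]
  have hnr : (n : k) * r ^ (n - 1) ≠ 0 := mul_ne_zero hn (pow_ne_zero _ hr0)
  refine ⟨V, hV0, ?_⟩
  ext m
  rcases Nat.eq_zero_or_pos m with rfl | hm
  · rw [coeff_zero_eq_constantCoeff_apply, coeff_zero_eq_constantCoeff_apply, map_pow, hV0, hr]
  · set Q : PowerSeries k := PowerSeries.mk fun j => if j < m then fixFun step j else 0 with hQ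
    have hagree : ∀ j < m, coeff j V = coeff j Q := by
      intro j hj
      rw [hV, hQ, coeff_mk, coeff_mk, if_pos hj]
    have key := coeff_pow_key (P := V) (Q := Q) hm n hagree
    have hQm : coeff m Q = 0 := by rw [hQ, coeff_mk, if_neg (by omega)]
    have hVm : coeff m V = ((n : k) * r ^ (n - 1))⁻¹ * (coeff m u - coeff m (Q ^ n)) := by
      rw [hV, coeff_mk, fixFun_spec hloc]
      simp only [hstep, if_neg (by omega : ¬ m = 0)]
      rfl
    rw [key, hV0, hQm, hVm, sub_zero]
    field_simp
    ring

/-! ### injectivity of composition on the left -/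

lemma comp_left_inj {M : PowerSeries k} (hM0 : constantCoeff M = 0)
    (hM1 : coeff 1 M ≠ 0) {W W' : PowerSeries k} (hW : constantCoeff W = 0)
    (hW' : constantCoeff W' = 0) (h : comp M W = comp M W') : W = W' := by
  ext m
  induction m using Nat.strong_induction_on with
  | _ m ih =>
    rcases Nat.eq_zero_or_pos m with rfl | hm
    · rw [coeff_zero_eq_constantCoeff_apply, coeff_zero_eq_constantCoeff_apply, hW, hW']
    · have hcm : coeff m (comp M W) = coeff m (comp M W') := by rw [h]
      rw [coeff_comp, coeff_comp] at hcm
      have hsplit : ∀ Y : PowerSeries k,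
          ∑ i ∈ Finset.range (m + 1), coeff i M * coeff m (Y ^ i) =
            coeff 0 M * coeff m (1 : PowerSeries k) + coeff 1 M * coeff m Y +
              ∑ i ∈ Finset.Icc 2 m, coeff i M * coeff m (Y ^ i) := by
        intro Y
        have hr : Finset.range (m + 1) = insert 0 (insert 1 (Finset.Icc 2 m)) := by
          ext x
          simp only [Finset.mem_range, Finset.mem_insert, Finset.mem_Icc]
          omega
        rw [hr, Finset.sum_insert (by simp), Finset.sum_insert (by simp)]
        simp only [pow_zero, pow_one]
        ring
      rw [hsplit W, hsplit W'] at hcm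
      have hpow : ∀ i ∈ Finset.Icc 2 m,
          coeff i M * coeff m (W ^ i) = coeff i M * coeff m (W' ^ i) := by
        intro i hi
        rw [Finset.mem_Icc] at hi
        rw [coeff_pow_congr hm hi.1 hW (fun j hj => ih j hj)]
      rw [Finset.sum_congr rfl hpow] at hcm
      have : coeff 1 M * coeff m W = coeff 1 M * coeff m W' := by
        have h0 : coeff 0 M = 0 := by rw [coeff_zero_eq_constantCoeff_apply, hM0]
        rw [h0] at hcm
        linear_combination hcm
      exact mul_left_cancel₀ hM1 this


/-! ### compositional inverse -/

lemma exists_comp_inv {M : PowerSeries k} (hM0 : constantCoeff M = 0)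
    (hM1 : coeff 1 M ≠ 0) :
    ∃ N : PowerSeries k, constantCoeff N = 0 ∧ coeff 1 N ≠ 0 ∧
      comp M N = X ∧ comp N M = X := by
  set step : (ℕ → k) → ℕ → k := fun c m =>
    if m = 0 then 0 else
      (coeff 1 M)⁻¹ * ((if m = 1 then 1 else 0) -
        ∑ i ∈ Finset.Icc 2 m, coeff i M *
          coeff m ((PowerSeries.mk fun j => if j < m then c j else 0) ^ i))
    with hstep
  have hloc : ∀ c c' m, (∀ j < m, c j = c' j) → step c m = step c' m := by
    intro c c' m h
    rcases Nat.eq_zero_or_pos m with rfl | hm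
    · simp [hstep]
    · have : (PowerSeries.mk fun j => if j < m then c j else 0) =
          (PowerSeries.mk fun j => if j < m then c' j else 0) := by
        ext j
        rw [coeff_mk, coeff_mk]
        split_ifs with hj
        · exact h j hj
        · rfl
      simp only [hstep, this]
  set N : PowerSeries k := PowerSeries.mk (fixFun step) with hN
  have hN0 : constantCoeff N = 0 := by
    rw [hN, ← coeff_zero_eq_constantCoeff_apply, coeff_mk, fixFun_spec hloc]
    simp [hstep]
  have hN1 : coeff 1 N = (coeff 1 M)⁻¹ := by
    rw [hN, coeff_mk, fixFun_spec hloc]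
    simp [hstep]
  have hMN : comp M N = X := by
    ext m
    rcases Nat.eq_zero_or_pos m with rfl | hm
    · rw [coeff_zero_eq_constantCoeff_apply, constantCoeff_comp, hM0,
        coeff_zero_eq_constantCoeff_apply, constantCoeff_X]
    · set Q : PowerSeries k := PowerSeries.mk fun j => if j < m then fixFun step j else 0 with hQ
      have hagree : ∀ j < m, coeff j N = coeff j Q := by
        intro j hj
        rw [hN, hQ, coeff_mk, coeff_mk, if_pos hj]
      rw [coeff_comp]
      have hr : Finset.range (m + 1) = insert 0 (insert 1 (Finset.Icc 2 m)) := by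
        ext x
        simp only [Finset.mem_range, Finset.mem_insert, Finset.mem_Icc]
        omega
      rw [hr, Finset.sum_insert (by simp), Finset.sum_insert (by simp)]
      have h0 : coeff 0 M = 0 := by rw [coeff_zero_eq_constantCoeff_apply, hM0]
      have hpow : ∀ i ∈ Finset.Icc 2 m,
          coeff i M * coeff m (N ^ i) = coeff i M * coeff m (Q ^ i) := by
        intro i hi
        rw [Finset.mem_Icc] at hi
        rw [coeff_pow_congr hm hi.1 hN0 hagree]
      rw [Finset.sum_congr rfl hpow]
      have hNm : coeff m N = (coeff 1 M)⁻¹ * ((if m = 1 then (1:k) else 0) -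
          ∑ i ∈ Finset.Icc 2 m, coeff i M * coeff m (Q ^ i)) := by
        rw [hN, coeff_mk, fixFun_spec hloc]
        simp only [hstep, if_neg (by omega : ¬ m = 0)]
        rfl
      rw [h0, pow_one, hNm, coeff_X]
      have : coeff 1 M * ((coeff 1 M)⁻¹ * ((if m = 1 then (1:k) else 0) -
          ∑ i ∈ Finset.Icc 2 m, coeff i M * coeff m (Q ^ i))) =
          (if m = 1 then (1:k) else 0) -
            ∑ i ∈ Finset.Icc 2 m, coeff i M * coeff m (Q ^ i) := by
        rw [← mul_assoc, mul_inv_cancel₀ hM1, one_mul]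
      rw [this]
      ring
  refine ⟨N, hN0, by rw [hN1]; exact inv_ne_zero hM1, hMN, ?_⟩
  have hNM0 : constantCoeff (comp N M) = 0 := by rw [constantCoeff_comp, hN0]
  apply comp_left_inj hM0 hM1 hNM0 (by rw [constantCoeff_X])
  rw [← comp_assoc M hN0 hM0, hMN, comp_X_left hM0, comp_X_right]


/-! ### order helpers -/

lemma order_pow_eq {P : PowerSeries k} {d : ℕ} (h : P.order = (d : ℕ∞)) (i : ℕ) :
    (P ^ i).order = ((i * d : ℕ) : ℕ∞) := by
  induction i with
  | zero => simpa using order_one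
  | succ i ih =>
    rw [pow_succ, order_mul, ih, h]
    push_cast
    ring

lemma exists_factor_X_pow {P : PowerSeries k} {d : ℕ} (h : P.order = (d : ℕ∞)) :
    ∃ P' : PowerSeries k, P = X ^ d * P' ∧ constantCoeff P' ≠ 0 := by
  obtain ⟨hd, hlow⟩ := order_eq_nat.mp h
  refine ⟨PowerSeries.mk fun j => coeff (j + d) P, ?_, ?_⟩
  · ext m
    rw [coeff_X_pow_mul']
    split_ifs with hle
    · rw [coeff_mk, Nat.sub_add_cancel hle]
    · exact hlow m (by omega)
  · rw [← coeff_zero_eq_constantCoeff_apply, coeff_mk, zero_add]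
    exact hd

end CompAux

open CompAux in
theorem stmt9 {k : Type*} [Field k] [IsAlgClosed k] [CharZero k]
    {n : ℕ} (hn : 2 ≤ n) (A : PowerSeries k) (hA : A.order = (n : ℕ∞))
    (X₁ X₂ : PowerSeries k) (h₁ : constantCoeff X₁ = 0) (h₂ : constantCoeff X₂ = 0) :
    comp A X₁ = comp A X₂ ↔
      ∃ φ : PowerSeries k, φ.order = 1 ∧ comp A φ = A ∧ X₂ = comp φ X₁ := by
  have hnk : (n : k) ≠ 0 := Nat.cast_ne_zero.mpr (by omega)
  constructor
  · intro h
    -- decompose A = C a * M ^ n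
    obtain ⟨U, hAU, hU0⟩ := exists_factor_X_pow hA
    set a := constantCoeff U with ha
    have haz : a ≠ 0 := hU0
    obtain ⟨r, hr⟩ := IsAlgClosed.exists_pow_nat_eq (1 : k) (by omega : 0 < n)
    have hrz : r ≠ 0 := by
      intro h0
      rw [h0, zero_pow (by omega : n ≠ 0)] at hr
      exact one_ne_zero hr.symm
    have hu0 : constantCoeff (C a⁻¹ * U) = 1 := by
      rw [map_mul, constantCoeff_C, ← ha, inv_mul_cancel₀ haz]
    obtain ⟨V, hV0, hVn⟩ := exists_nth_root hnk hrz (by rw [hu0, hr])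
    set M : PowerSeries k := X * V with hM
    have hM0 : constantCoeff M = 0 := by rw [hM, map_mul, constantCoeff_X, zero_mul]
    have hM1 : coeff 1 M = r := by
      rw [hM, mul_comm, PowerSeries.coeff_succ_mul_X, coeff_zero_eq_constantCoeff_apply, hV0]
    have hM1z : coeff 1 M ≠ 0 := by rw [hM1]; exact hrz
    have hAM : A = C a * M ^ n := by
      rw [hM, mul_pow, hVn, hAU]
      rw [show (C a * (X ^ n * (C a⁻¹ * U))) = (C a * C a⁻¹) * (X ^ n * U) by ring,
        ← map_mul, mul_inv_cancel₀ haz, map_one, one_mul]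
    obtain ⟨N, hN0, hN1, hMN, hNM⟩ := exists_comp_inv hM0 hM1z
    -- the composition equation in terms of M
    have hcompA : ∀ (Y : PowerSeries k), constantCoeff Y = 0 →
        comp A Y = C a * (comp M Y) ^ n := by
      intro Y hY
      rw [hAM, comp_mul_left hY, comp_C_left, comp_pow_left hY]
    have hPQn : (comp M X₁) ^ n = (comp M X₂) ^ n := by
      have := h
      rw [hcompA X₁ h₁, hcompA X₂ h₂] at this
      exact mul_left_cancel₀ (fun hC => haz (by
        have := congrArg (constantCoeff) hC
        rwa [constantCoeff_C, map_zero] at this)) this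
    by_cases hX1 : X₁ = 0
    · -- degenerate case: X₁ = 0, then X₂ = 0
      have hA0 : comp A X₁ = 0 := by
        rw [hX1, comp_zero_right, ← coeff_zero_eq_constantCoeff_apply,
          (order_eq_nat.mp hA).2 0 (by omega), map_zero]
      have hQn : (comp M X₂) ^ n = 0 := by
        have := h.symm
        rw [hA0, hcompA X₂ h₂] at this
        rcases mul_eq_zero.mp this with hC | hQ
        · exact absurd (by
            have := congrArg (constantCoeff) hC
            rwa [constantCoeff_C, map_zero] at this) haz
        · exact hQ
      have hQ0 : comp M X₂ = 0 := pow_eq_zero_iff (by omega : n ≠ 0) |>.mp hQn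
      have hX2 : X₂ = 0 := by
        apply comp_left_inj hM0 hM1z h₂ (map_zero _)
        rw [hQ0, comp_zero_right, hM0, map_zero]
      refine ⟨X, order_X, comp_X_right A, ?_⟩
      rw [comp_X_left h₁, hX1, hX2]
    · -- main case
      have hP : comp M X₁ ≠ 0 := by
        intro h0
        apply hX1
        apply comp_left_inj hM0 hM1z h₁ (map_zero _)
        rw [h0, comp_zero_right, hM0, map_zero]
      have hQ : comp M X₂ ≠ 0 := by
        intro h0
        rw [h0, zero_pow (by omega : n ≠ 0), pow_eq_zero_iff (by omega : n ≠ 0)] at hPQn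
        exact hP hPQn
      -- orders
      obtain ⟨dP, hdP⟩ : ∃ d : ℕ, (comp M X₁).order = (d : ℕ∞) := by
        have hlt := order_finite_iff_ne_zero.mpr hP
        exact ⟨(comp M X₁).order.lift hlt, ((comp M X₁).order.coe_lift hlt).symm⟩
      obtain ⟨dQ, hdQ⟩ : ∃ d : ℕ, (comp M X₂).order = (d : ℕ∞) := by
        have hlt := order_finite_iff_ne_zero.mpr hQ
        exact ⟨(comp M X₂).order.lift hlt, ((comp M X₂).order.coe_lift hlt).symm⟩
      have hd : dP = dQ := by
        have h1 := order_pow_eq hdP n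
        have h2 := order_pow_eq hdQ n
        rw [hPQn, h2] at h1
        have : n * dQ = n * dP := by exact_mod_cast h1
        exact (Nat.eq_of_mul_eq_mul_left (by omega) this).symm
      subst hd
      obtain ⟨P', hP'eq, hP'0⟩ := exists_factor_X_pow hdP
      obtain ⟨Q', hQ'eq, hQ'0⟩ := exists_factor_X_pow hdQ
      have hP'Q' : P' ^ n = Q' ^ n := by
        have : (X : PowerSeries k) ^ (dP * n) * P' ^ n = X ^ (dP * n) * Q' ^ n := by
          rw [pow_mul, ← mul_pow, ← mul_pow, ← hP'eq, ← hQ'eq, hPQn]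
        exact mul_left_cancel₀ (pow_ne_zero _ X_ne_zero) this
      -- extract root of unity
      set c₁ := constantCoeff P' with hc₁
      set c₂ := constantCoeff Q' with hc₂
      set ξ : k := c₂ * c₁⁻¹ with hξ
      have hc₁n : c₁ ^ n = c₂ ^ n := by
        have := congrArg (constantCoeff) hP'Q'
        rwa [map_pow, map_pow] at this
      have hξn : ξ ^ n = 1 := by
        rw [hξ, mul_pow, inv_pow, ← hc₁n, mul_inv_cancel₀ (pow_ne_zero _ hP'0)]
      have hξz : ξ ≠ 0 := mul_ne_zero hQ'0 (inv_ne_zero hP'0)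
      have hQ'P' : Q' = C ξ * P' := by
        symm
        apply pow_left_injective hnk (P := C ξ * P') (Q := Q')
        · rw [map_mul, constantCoeff_C, hξ, mul_assoc, inv_mul_cancel₀ hP'0, mul_one]
        · rw [map_mul, constantCoeff_C]
          exact mul_ne_zero hξz hP'0
        · rw [mul_pow, ← map_pow, hξn, map_one, one_mul, hP'Q']
      have hQP : comp M X₂ = C ξ * comp M X₁ := by
        rw [hQ'eq, hQ'P', hP'eq]
        ring
      -- build φ
      set L : PowerSeries k := C ξ * M with hL
      have hL0 : constantCoeff L = 0 := by rw [hL, map_mul, hM0, mul_zero]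
      have hL1 : coeff 1 L = ξ * r := by rw [hL, coeff_C_mul, hM1]
      set φ : PowerSeries k := comp N L with hφ
      have hφ0 : constantCoeff φ = 0 := by rw [hφ, constantCoeff_comp, hN0]
      have hφ1 : coeff 1 φ ≠ 0 := by
        rw [hφ, coeff_comp, Finset.sum_range_succ, Finset.sum_range_one, pow_zero, pow_one,
          coeff_one, if_neg one_ne_zero, mul_zero, zero_add, hL1]
        exact mul_ne_zero hN1 (mul_ne_zero hξz hrz)
      have hMφ : comp M φ = L := by
        rw [hφ, ← comp_assoc M hN0 hL0, hMN, comp_X_left hL0]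
      refine ⟨φ, ?_, ?_, ?_⟩
      · rw [show (1 : ℕ∞) = ((1 : ℕ) : ℕ∞) by simp]
        refine order_eq_nat.mpr ⟨hφ1, fun i hi => ?_⟩
        have : i = 0 := by omega
        subst this
        rw [coeff_zero_eq_constantCoeff_apply, hφ0]
      · rw [hcompA φ hφ0, hMφ, hL, mul_pow, ← map_pow, hξn, map_one, one_mul, ← hAM]
      · rw [hφ, comp_assoc N hL0 h₁, hL, comp_C_mul_left h₁, ← hQP,
          ← comp_assoc N hM0 h₂, hNM, comp_X_left h₂]
  · rintro ⟨φ, hφord, hAφ, rfl⟩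
    have hφ0 : constantCoeff φ = 0 := by
      rw [← coeff_zero_eq_constantCoeff_apply]
      apply coeff_of_lt_order
      rw [hφord]
      exact_mod_cast zero_lt_one
    rw [← comp_assoc A hφ0 h₁, hAφ]
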